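/- arXiv:1903.04158 — 7 statements merged into one kernel-verified Lean document; each statement's English description precedes it below -/
import Mathlib

section
/- Let g ≥ 2 and n ≥ 1 be integers, let 0 < r_1 < r_2 < ⋯ < r_n = g be integers, let μ_1 > μ_2 > ⋯ > μ_n ≥ 0 be rational numbers and set μ_{n+1} = 0. Let d_1, …, d_n be rational numbers satisfying the Clifford type inequalities d_i ≥ 2(r_i − 1) for every 1 ≤ i ≤ n, and set d_{n+1} = 2g − 2. Put χ = Σ_{i=1}^n r_i(μ_i − μ_{i+1}). If a real number K satisfies K ≥ Σ_{i=1}^n (d_i + d_{i+1})(μ_i − μ_{i+1}) and K ≥ (2g − 2)(μ_1 + μ_n), then g·K ≥ (4g − 4)·χ. -/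
lemma xiao_tele (f : ℕ → ℚ) (m : ℕ) :
    ∑ i ∈ Finset.Icc 1 m, (f i - f (i + 1)) = f 1 - f (m + 1) := by
  induction m with
  | zero => simp
  | succ k ih =>
      rw [Finset.sum_Icc_succ_top (Nat.succ_le_succ (Nat.zero_le k)), ih]
      ring

/-- Numerical core of Xiao's slope inequality in positive characteristic. -/
theorem stmt_0 (g n : ℕ) (hg : 2 ≤ g) (hn : 1 ≤ n)
    (r : ℕ → ℤ) (μ d : ℕ → ℚ) (χ : ℚ) (K : ℝ)
    (hr_pos : 0 < r 1)
    (hr_mono : ∀ i, 1 ≤ i → i < n → r i < r (i + 1))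
    (hr_n : r n = (g : ℤ))
    (hμ_mono : ∀ i, 1 ≤ i → i < n → μ (i + 1) < μ i)
    (hμ_n : 0 ≤ μ n)
    (hμ_n1 : μ (n + 1) = 0)
    (hd : ∀ i, 1 ≤ i → i ≤ n → 2 * ((r i : ℚ) - 1) ≤ d i)
    (hd_n1 : d (n + 1) = 2 * (g : ℚ) - 2)
    (hχ : χ = ∑ i ∈ Finset.Icc 1 n, (r i : ℚ) * (μ i - μ (i + 1)))
    (hK1 : ((∑ i ∈ Finset.Icc 1 n, (d i + d (i + 1)) * (μ i - μ (i + 1)) : ℚ) : ℝ) ≤ K)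
    (hK2 : (((2 * (g : ℚ) - 2) * (μ 1 + μ n) : ℚ) : ℝ) ≤ K) :
    (4 * (g : ℝ) - 4) * (χ : ℝ) ≤ (g : ℝ) * K := by
  have hgQ : (2 : ℚ) ≤ (g : ℚ) := by exact_mod_cast hg
  -- nonnegativity of the gaps
  have hε : ∀ i ∈ Finset.Icc 1 n, 0 ≤ μ i - μ (i + 1) := by
    intro i hi
    simp only [Finset.mem_Icc] at hi
    rcases eq_or_lt_of_le hi.2 with h | h
    · subst h; rw [hμ_n1]; linarith
    · linarith [hμ_mono i hi.1 h]
  -- termwise key inequality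
  have key : ∀ i ∈ Finset.Icc 1 n,
      (4 * (g : ℚ) - 4) * ((r i : ℚ) * (μ i - μ (i + 1)))
        ≤ ((g : ℚ) - 1) * ((d i + d (i + 1)) * (μ i - μ (i + 1)))
          + (2 * (g : ℚ) - 2) * ((if i = n then 2 else 1) * (μ i - μ (i + 1))) := by
    intro i hi
    have hεi := hε i hi
    simp only [Finset.mem_Icc] at hi
    have hdi : 2 * ((r i : ℚ) - 1) ≤ d i := hd i hi.1 hi.2
    have hg1 : (0 : ℚ) ≤ (g : ℚ) - 1 := by linarith
    rcases eq_or_lt_of_le hi.2 with h | h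
    · subst h
      rw [if_pos rfl]
      have hri : (r i : ℚ) = (g : ℚ) := by exact_mod_cast hr_n
      rw [hri, hd_n1]
      nlinarith [mul_nonneg (mul_nonneg hg1 (by linarith [hdi, hri] : (0:ℚ) ≤ d i - (2 * (g:ℚ) - 2))) hεi]
    · have hne : i ≠ n := Nat.ne_of_lt h
      simp only [if_neg hne]
      have hdi1 : 2 * ((r (i+1) : ℚ) - 1) ≤ d (i+1) := hd (i+1) (Nat.le_succ_of_le hi.1) h
      have hrr : (r i : ℚ) + 1 ≤ (r (i+1) : ℚ) := by
        have := hr_mono i hi.1 h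
        exact_mod_cast this
      nlinarith [mul_nonneg (mul_nonneg hg1 (by linarith : (0:ℚ) ≤ d i + d (i+1) - (2*((r i : ℚ)-1) + 2*((r (i+1) : ℚ)-1)))) hεi,
        mul_nonneg (mul_nonneg hg1 (by linarith : (0:ℚ) ≤ (r (i+1) : ℚ) - (r i : ℚ) - 1)) hεi]
  have hsum := Finset.sum_le_sum key
  -- simplify both sides of the summed inequality
  rw [← Finset.mul_sum, Finset.sum_add_distrib, ← Finset.mul_sum, ← Finset.mul_sum, ← hχ] at hsum
  have hsplit : ∑ i ∈ Finset.Icc 1 n, ((if i = n then (2:ℚ) else 1) * (μ i - μ (i + 1)))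
      = (∑ i ∈ Finset.Icc 1 n, (μ i - μ (i + 1)))
        + ∑ i ∈ Finset.Icc 1 n, (if i = n then (μ i - μ (i + 1)) else 0) := by
    rw [← Finset.sum_add_distrib]
    apply Finset.sum_congr rfl
    intro i _
    split <;> ring
  rw [hsplit, xiao_tele μ n, hμ_n1, Finset.sum_ite_eq' (Finset.Icc 1 n) n,
    if_pos (Finset.mem_Icc.mpr ⟨hn, le_refl n⟩), hμ_n1] at hsum
  -- hsum : (4g-4)χ ≤ (g-1)A + (2g-2)((μ1 - 0) + (μ n - 0))
  set A : ℚ := ∑ i ∈ Finset.Icc 1 n, (d i + d (i + 1)) * (μ i - μ (i + 1)) with hA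
  have hQ : (4 * (g : ℚ) - 4) * χ ≤ ((g : ℚ) - 1) * A + (2 * (g : ℚ) - 2) * (μ 1 + μ n) := by
    calc (4 * (g : ℚ) - 4) * χ ≤ ((g : ℚ) - 1) * A + (2 * (g : ℚ) - 2) * ((μ 1 - 0) + (μ n - 0)) := hsum
    _ = ((g : ℚ) - 1) * A + (2 * (g : ℚ) - 2) * (μ 1 + μ n) := by ring
  -- pass to ℝ
  have hQR : (4 * (g : ℝ) - 4) * (χ : ℝ)
      ≤ ((g : ℝ) - 1) * (A : ℝ) + (((2 * (g : ℚ) - 2) * (μ 1 + μ n) : ℚ) : ℝ) := by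
    have := (Rat.cast_le (K := ℝ)).mpr hQ
    push_cast at this ⊢
    linarith
  have hgR : (2 : ℝ) ≤ (g : ℝ) := by exact_mod_cast hg
  have h1 : ((g : ℝ) - 1) * (A : ℝ) ≤ ((g : ℝ) - 1) * K :=
    mul_le_mul_of_nonneg_left hK1 (by linarith)
  linarith
end

section
/- Let g ≥ 2 and n ≥ 1 be integers, let 0 < r_1 < r_2 < ⋯ < r_n = g be integers, let μ_1 > μ_2 > ⋯ > μ_n ≥ 0 be rational numbers and set μ_{n+1} = 0. Let d_1, …, d_n be rational numbers satisfying the Clifford type inequalities d_i ≥ 2(r_i − 1) for every 1 ≤ i ≤ n, and set d_{n+1} = 2g − 2. Put χ = Σ_{i=1}^n r_i(μ_i − μ_{i+1}). Then Σ_{i=1}^n (d_i + d_{i+1})(μ_i − μ_{i+1}) ≥ 4χ − 2(μ_1 + μ_n). -/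
lemma tele_aux (μ : ℕ → ℚ) (n : ℕ) :
    ∑ i ∈ Finset.Icc 1 n, (μ i - μ (i + 1)) = μ 1 - μ (n + 1) := by
  induction n with
  | zero => simp
  | succ m ih =>
    rw [Finset.sum_Icc_succ_top (Nat.le_add_left 1 m), ih]
    ring

/-- Inequality (3.3) in the proof of Xiao's slope inequality in positive characteristic. -/
theorem stmt_1 (g n : ℕ) (hg : 2 ≤ g) (hn : 1 ≤ n)
    (r : ℕ → ℤ) (μ d : ℕ → ℚ) (χ : ℚ)
    (hr_pos : 0 < r 1)
    (hr_mono : ∀ i, 1 ≤ i → i < n → r i < r (i + 1))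
    (hr_n : r n = (g : ℤ))
    (hμ_mono : ∀ i, 1 ≤ i → i < n → μ (i + 1) < μ i)
    (hμ_n : 0 ≤ μ n)
    (hμ_n1 : μ (n + 1) = 0)
    (hd : ∀ i, 1 ≤ i → i ≤ n → 2 * ((r i : ℚ) - 1) ≤ d i)
    (hd_n1 : d (n + 1) = 2 * (g : ℚ) - 2)
    (hχ : χ = ∑ i ∈ Finset.Icc 1 n, (r i : ℚ) * (μ i - μ (i + 1))) :
    4 * χ - 2 * (μ 1 + μ n) ≤ ∑ i ∈ Finset.Icc 1 n, (d i + d (i + 1)) * (μ i - μ (i + 1)) := by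
  have key : ∀ i ∈ Finset.Icc 1 n,
      (4 * (r i : ℚ) - 2) * (μ i - μ (i + 1)) - (if i = n then 2 * μ n else 0)
        ≤ (d i + d (i + 1)) * (μ i - μ (i + 1)) := by
    intro i hi
    rw [Finset.mem_Icc] at hi
    obtain ⟨h1, h2⟩ := hi
    rcases eq_or_lt_of_le h2 with hin | hin
    · subst hin
      have hdn := hd i h1 le_rfl
      rw [hr_n] at hdn
      simp only [hr_n, hμ_n1, hd_n1, eq_self_iff_true, if_true]
      push_cast
      push_cast at hdn
      nlinarith [mul_le_mul_of_nonneg_right hdn hμ_n]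
    · have hdi := hd i h1 h2
      have hdi1 := hd (i + 1) (by omega) hin
      have hri : r i + 1 ≤ r (i + 1) := hr_mono i h1 hin
      have hriq : (r i : ℚ) + 1 ≤ (r (i + 1) : ℚ) := by exact_mod_cast hri
      have hμi : μ (i + 1) ≤ μ i := (hμ_mono i h1 hin).le
      simp only [if_neg (by omega : ¬ i = n)]
      nlinarith [mul_le_mul_of_nonneg_right (show 4 * (r i : ℚ) - 2 ≤ d i + d (i + 1) by linarith)
        (by linarith : (0:ℚ) ≤ μ i - μ (i + 1))]
  have hsum := Finset.sum_le_sum key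
  have hnmem : n ∈ Finset.Icc 1 n := by simp [hn]
  have hexp : ∑ i ∈ Finset.Icc 1 n,
      ((4 * (r i : ℚ) - 2) * (μ i - μ (i + 1)) - (if i = n then 2 * μ n else 0))
      = 4 * χ - 2 * (μ 1 + μ n) := by
    rw [Finset.sum_sub_distrib, Finset.sum_ite_eq' _ n (fun _ => 2 * μ n), if_pos hnmem, hχ,
      Finset.mul_sum]
    have : ∑ i ∈ Finset.Icc 1 n, (4 * (r i : ℚ) - 2) * (μ i - μ (i + 1))
        = (∑ i ∈ Finset.Icc 1 n, 4 * ((r i : ℚ) * (μ i - μ (i + 1))))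
          - 2 * ∑ i ∈ Finset.Icc 1 n, (μ i - μ (i + 1)) := by
      rw [Finset.mul_sum, ← Finset.sum_sub_distrib]
      exact Finset.sum_congr rfl fun i _ => by ring
    rw [this, tele_aux, hμ_n1]
    ring
  linarith [hsum, hexp.ge]
end

section
/- Let n ≥ 1 be an integer, let 0 < r_1 < r_2 < ⋯ < r_n = 4 be integers (set r_0 = 0), let 0 = v_1 < v_2 < ⋯ < v_n be rational numbers, and let d_1 ≤ d_2 ≤ ⋯ ≤ d_n = 6 be rational numbers with d_i ≥ r_i − 1 for every 1 ≤ i ≤ n. Define Φ = Σ_{i=1}^{n−1}(d_i + d_{i+1})(v_i − v_{i+1}) + 12·v_n and Ψ = Σ_{i=1}^{n}(r_i − r_{i−1})·v_i. Then Φ ≤ 5·Ψ. -/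
/-- Combinatorial lemma (case g = 4) for the slope inequality of genus-4 fibrations. -/
theorem stmt_3 (n : ℕ) (hn : 1 ≤ n)
    (r : ℕ → ℤ) (v d : ℕ → ℚ) (Φ Ψ : ℚ)
    (hr0 : r 0 = 0)
    (hr_pos : 0 < r 1)
    (hr_mono : ∀ i, 1 ≤ i → i < n → r i < r (i + 1))
    (hr_n : r n = 4)
    (hv1 : v 1 = 0)
    (hv_mono : ∀ i, 1 ≤ i → i < n → v i < v (i + 1))
    (hd_mono : ∀ i, 1 ≤ i → i < n → d i ≤ d (i + 1))
    (hd_n : d n = 6)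
    (hd : ∀ i, 1 ≤ i → i ≤ n → (r i : ℚ) - 1 ≤ d i)
    (hΦ : Φ = (∑ i ∈ Finset.Icc 1 (n - 1), (d i + d (i + 1)) * (v i - v (i + 1))) + 12 * v n)
    (hΨ : Ψ = ∑ i ∈ Finset.Icc 1 n, ((r i : ℚ) - (r (i - 1) : ℚ)) * v i) :
    Φ ≤ 5 * Ψ := by
  have key : ∀ i, 1 ≤ i → i ≤ n → (i : ℤ) ≤ r i := by
    intro i
    induction i with
    | zero => omega
    | succ k ih =>
      intro _ hkn
      rcases Nat.eq_zero_or_pos k with hk | hk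
      · subst hk; simpa using (Int.add_one_le_iff.mpr hr_pos)
      · have h1 := ih (by omega) (by omega)
        have h2 := hr_mono k hk (by omega)
        push_cast
        omega
  have hn4 : n ≤ 4 := by
    have h := key n hn le_rfl
    rw [hr_n] at h
    exact_mod_cast h
  interval_cases n
  · -- n = 1
    simp only [Nat.sub_self] at hΦ
    rw [show Finset.Icc 1 0 = (∅ : Finset ℕ) from rfl, Finset.sum_empty] at hΦ
    rw [show Finset.Icc 1 1 = {1} from rfl, Finset.sum_singleton] at hΨ
    rw [hΦ, hΨ, hv1]
    norm_num
  · -- n = 2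
    rw [show (2:ℕ) - 1 = 1 from rfl, show Finset.Icc 1 1 = {1} from rfl,
      Finset.sum_singleton] at hΦ
    rw [show Finset.Icc 1 2 = {1, 2} from rfl, Finset.sum_insert (by decide),
      Finset.sum_singleton] at hΨ
    norm_num at hΦ hΨ
    have hv2 : v 1 < v 2 := by simpa using hv_mono 1 le_rfl (by norm_num)
    have hd1 := hd 1 le_rfl (by norm_num)
    have hr1 : (1:ℤ) ≤ r 1 := hr_pos
    have hr1' : r 1 ≤ 3 := by
      have h := hr_mono 1 le_rfl (by norm_num)
      norm_num at h; omega
    have hr1q : (1:ℚ) ≤ (r 1 : ℚ) := by exact_mod_cast hr1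
    have hr1q' : (r 1 : ℚ) ≤ 3 := by exact_mod_cast hr1'
    rw [hv1] at hv2
    rw [hΦ, hΨ, hv1, hr_n, hd_n, hr0]
    push_cast
    nlinarith [mul_nonneg (by linarith : (0:ℚ) ≤ 3 - (r 1 : ℚ)) (le_of_lt hv2),
      mul_nonneg (by linarith : (0:ℚ) ≤ d 1 - (r 1 : ℚ) + 1) (le_of_lt hv2)]
  · -- n = 3
    rw [show (3:ℕ) - 1 = 2 from rfl, show Finset.Icc 1 2 = {1, 2} from rfl,
      Finset.sum_insert (by decide), Finset.sum_singleton] at hΦ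
    rw [show Finset.Icc 1 3 = {1, 2, 3} from rfl, Finset.sum_insert (by decide),
      Finset.sum_insert (by decide), Finset.sum_singleton] at hΨ
    norm_num at hΦ hΨ
    have hv2 : v 1 < v 2 := by simpa using hv_mono 1 le_rfl (by norm_num)
    have hv3 : v 2 < v 3 := by simpa using hv_mono 2 (by norm_num) (by norm_num)
    have hd1 := hd 1 le_rfl (by norm_num)
    have hd2 := hd 2 (by norm_num) (by norm_num)
    have hr1 : (1:ℤ) ≤ r 1 := hr_pos
    have hr2 : r 1 + 1 ≤ r 2 := by
      have h := hr_mono 1 le_rfl (by norm_num); norm_num at h; omega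
    have hr2' : r 2 ≤ 3 := by
      have h := hr_mono 2 (by norm_num) (by norm_num); norm_num at h; omega
    have hr1q : (1:ℚ) ≤ (r 1 : ℚ) := by exact_mod_cast hr1
    have hr2q : (r 1 : ℚ) + 1 ≤ (r 2 : ℚ) := by exact_mod_cast hr2
    have hr2q' : (r 2 : ℚ) ≤ 3 := by exact_mod_cast hr2'
    rw [hv1] at hv2
    rw [hΦ, hΨ, hv1, hr_n, hd_n, hr0]
    push_cast
    nlinarith [mul_nonneg (by linarith : (0:ℚ) ≤ 3 - (r 2 : ℚ)) (by linarith : (0:ℚ) ≤ v 3 - v 2),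
      mul_nonneg (by linarith : (0:ℚ) ≤ d 1 - (r 1 : ℚ) + 1) (le_of_lt hv2),
      mul_nonneg (by linarith : (0:ℚ) ≤ d 2 - (r 2 : ℚ) + 1) (by linarith : (0:ℚ) ≤ v 3),
      mul_nonneg (by linarith : (0:ℚ) ≤ (r 2 : ℚ) - (r 1 : ℚ) - 1) (le_of_lt hv2),
      mul_nonneg (by linarith : (0:ℚ) ≤ 3 - (r 2 : ℚ)) (by linarith : (0:ℚ) ≤ v 3)]
  · -- n = 4
    rw [show (4:ℕ) - 1 = 3 from rfl, show Finset.Icc 1 3 = {1, 2, 3} from rfl,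
      Finset.sum_insert (by decide), Finset.sum_insert (by decide), Finset.sum_singleton] at hΦ
    rw [show Finset.Icc 1 4 = {1, 2, 3, 4} from rfl, Finset.sum_insert (by decide),
      Finset.sum_insert (by decide), Finset.sum_insert (by decide), Finset.sum_singleton] at hΨ
    norm_num at hΦ hΨ
    have hv2 : v 1 < v 2 := by simpa using hv_mono 1 le_rfl (by norm_num)
    have hv3 : v 2 < v 3 := by simpa using hv_mono 2 (by norm_num) (by norm_num)
    have hv4 : v 3 < v 4 := by simpa using hv_mono 3 (by norm_num) (by norm_num)
    have hd1 := hd 1 le_rfl (by norm_num)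
    have hd2 := hd 2 (by norm_num) (by norm_num)
    have hd3 := hd 3 (by norm_num) (by norm_num)
    have hd34 : d 3 ≤ d 4 := by simpa using hd_mono 3 (by norm_num) (by norm_num)
    have h2 : r 1 < r 2 := by
      have h := hr_mono 1 le_rfl (by norm_num); norm_num at h; exact h
    have h3 : r 2 < r 3 := by
      have h := hr_mono 2 (by norm_num) (by norm_num); norm_num at h; exact h
    have h4 : r 3 < r 4 := by
      have h := hr_mono 3 (by norm_num) (by norm_num); norm_num at h; exact h
    have hr1 : r 1 = 1 := by omega
    have hr2 : r 2 = 2 := by omega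
    have hr3 : r 3 = 3 := by omega
    rw [hr1] at hd1
    rw [hr2] at hd2
    rw [hr3] at hd3
    push_cast at hd1 hd2 hd3
    rw [hd_n] at hd34
    rw [hv1] at hv2
    rw [hΦ, hΨ, hv1, hr_n, hd_n, hr0, hr1, hr2, hr3]
    push_cast
    nlinarith [mul_nonneg (by linarith : (0:ℚ) ≤ 6 - d 3) (by linarith : (0:ℚ) ≤ v 4 - v 2),
      mul_nonneg (by linarith : (0:ℚ) ≤ d 1) (le_of_lt hv2),
      mul_nonneg (by linarith : (0:ℚ) ≤ d 2 - 1) (by linarith : (0:ℚ) ≤ v 3)]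
end

section
/- Let g ≥ 5 and n ≥ 1 be integers, let 0 < r_1 < r_2 < ⋯ < r_n = g be integers (set r_0 = 0), let 0 = v_1 < v_2 < ⋯ < v_n be rational numbers, and let d_1 ≤ d_2 ≤ ⋯ ≤ d_n = 2g − 2 be rational numbers with d_i ≥ r_i − 1 for every 1 ≤ i ≤ n. Define Φ = Σ_{i=1}^{n−1}(d_i + d_{i+1})(v_i − v_{i+1}) + 4(g−1)·v_n and Ψ = Σ_{i=1}^{n}(r_i − r_{i−1})·v_i. Then Φ ≤ (2g − 4)·Ψ. -/
private lemma tel_aux (v : ℕ → ℚ) (m : ℕ) :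
    ∑ j ∈ Finset.Icc 1 m, (v (j + 1) - v j) = v (m + 1) - v 1 := by
  induction m with
  | zero => simp
  | succ k ih =>
    rw [Finset.sum_Icc_succ_top (by omega : 1 ≤ k + 1), ih]
    ring

private lemma abel_aux (v ρ : ℕ → ℚ) (m : ℕ) :
    ∑ j ∈ Finset.Icc 1 m, (v (j + 1) - v j) * (ρ (m + 1) - ρ j)
      = ∑ i ∈ Finset.Icc 1 (m + 1), (ρ i - ρ (i - 1)) * (v i - v 1) := by
  induction m with
  | zero => simp
  | succ k ih =>
    rw [Finset.sum_Icc_succ_top (by omega : 1 ≤ k + 1),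
        Finset.sum_Icc_succ_top (by omega : 1 ≤ k + 1 + 1)]
    have expand : ∀ j ∈ Finset.Icc 1 k,
        (v (j + 1) - v j) * (ρ (k + 1 + 1) - ρ j)
          = (v (j + 1) - v j) * (ρ (k + 1) - ρ j)
            + (ρ (k + 1 + 1) - ρ (k + 1)) * (v (j + 1) - v j) := fun j _ => by ring
    rw [Finset.sum_congr rfl expand, Finset.sum_add_distrib, ← Finset.mul_sum,
        tel_aux, ih]
    simp only [Nat.add_sub_cancel]
    ring

/-- Combinatorial lemma (case g ≥ 5) for the slope inequality of fibrations of genus g ≥ 5. -/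
theorem stmt_4 (g n : ℕ) (hg : 5 ≤ g) (hn : 1 ≤ n)
    (r : ℕ → ℤ) (v d : ℕ → ℚ) (Φ Ψ : ℚ)
    (hr0 : r 0 = 0)
    (hr_pos : 0 < r 1)
    (hr_mono : ∀ i, 1 ≤ i → i < n → r i < r (i + 1))
    (hr_n : r n = (g : ℤ))
    (hv1 : v 1 = 0)
    (hv_mono : ∀ i, 1 ≤ i → i < n → v i < v (i + 1))
    (hd_mono : ∀ i, 1 ≤ i → i < n → d i ≤ d (i + 1))
    (hd_n : d n = 2 * (g : ℚ) - 2)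
    (hd : ∀ i, 1 ≤ i → i ≤ n → (r i : ℚ) - 1 ≤ d i)
    (hΦ : Φ = (∑ i ∈ Finset.Icc 1 (n - 1), (d i + d (i + 1)) * (v i - v (i + 1)))
        + 4 * ((g : ℚ) - 1) * v n)
    (hΨ : Ψ = ∑ i ∈ Finset.Icc 1 n, ((r i : ℚ) - (r (i - 1) : ℚ)) * v i) :
    Φ ≤ (2 * (g : ℚ) - 4) * Ψ := by
  obtain ⟨m, rfl⟩ : ∃ m, n = m + 1 := ⟨n - 1, by omega⟩
  have hmono : ∀ a b : ℕ, 1 ≤ a → a ≤ b → b ≤ m + 1 → r a ≤ r b := by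
    intro a b ha hab hb
    induction b, hab using Nat.le_induction with
    | base => exact le_refl _
    | succ c hac ih =>
      have h1 : r a ≤ r c := ih (by omega)
      have h2 : r c < r (c + 1) := hr_mono c (by omega) (by omega)
      omega
  have hg5 : (5 : ℚ) ≤ (g : ℚ) := by exact_mod_cast hg
  have hrmq : ((r (m + 1) : ℚ)) = (g : ℚ) := by exact_mod_cast congrArg (Int.cast : ℤ → ℚ) hr_n
  have key : (2 * (g : ℚ) - 4) * Ψ - Φ
      = ∑ j ∈ Finset.Icc 1 m, (v (j + 1) - v j) *
          (d j + d (j + 1) + (2 * (g : ℚ) - 4) * ((r (m + 1) : ℚ) - (r j : ℚ))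
            - (4 * (g : ℚ) - 4)) := by
    have e1 := tel_aux v m
    have e2 : ∑ j ∈ Finset.Icc 1 m, (v (j + 1) - v j) * ((r (m + 1) : ℚ) - (r j : ℚ))
        = ∑ i ∈ Finset.Icc 1 (m + 1), ((r i : ℚ) - (r (i - 1) : ℚ)) * (v i - v 1) :=
      abel_aux v (fun i => (r i : ℚ)) m
    have e2' : ∑ i ∈ Finset.Icc 1 (m + 1), ((r i : ℚ) - (r (i - 1) : ℚ)) * (v i - v 1)
        = ∑ i ∈ Finset.Icc 1 (m + 1), ((r i : ℚ) - (r (i - 1) : ℚ)) * v i := by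
      simp [hv1]
    have expand : ∀ j ∈ Finset.Icc 1 m,
        (v (j + 1) - v j) *
          (d j + d (j + 1) + (2 * (g : ℚ) - 4) * ((r (m + 1) : ℚ) - (r j : ℚ))
            - (4 * (g : ℚ) - 4))
        = -((d j + d (j + 1)) * (v j - v (j + 1)))
          + (2 * (g : ℚ) - 4) * ((v (j + 1) - v j) * ((r (m + 1) : ℚ) - (r j : ℚ)))
          + (-(4 * (g : ℚ) - 4)) * (v (j + 1) - v j) := fun j _ => by ring
    rw [hΦ, hΨ, Finset.sum_congr rfl expand, Finset.sum_add_distrib,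
        Finset.sum_add_distrib, ← Finset.mul_sum, ← Finset.mul_sum, e1, e2, e2',
        Finset.sum_neg_distrib, hv1]
    simp only [Nat.add_sub_cancel]
    ring
  have hterm : ∀ j ∈ Finset.Icc 1 m, 0 ≤ (v (j + 1) - v j) *
      (d j + d (j + 1) + (2 * (g : ℚ) - 4) * ((r (m + 1) : ℚ) - (r j : ℚ))
        - (4 * (g : ℚ) - 4)) := by
    intro j hj
    simp only [Finset.mem_Icc] at hj
    obtain ⟨hj1, hjm⟩ := hj
    have hv : 0 ≤ v (j + 1) - v j :=
      le_of_lt (sub_pos.mpr (hv_mono j hj1 (by omega)))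
    apply mul_nonneg hv
    have hdj : (r j : ℚ) - 1 ≤ d j := hd j hj1 (by omega)
    have h1 : r j < r (j + 1) := hr_mono j hj1 (by omega)
    rw [hrmq]
    rcases eq_or_lt_of_le hjm with rfl | hlt
    · -- j = m
      have h2 : r j ≤ (g : ℤ) - 1 := by omega
      have hrjq : (r j : ℚ) ≤ (g : ℚ) - 1 := by exact_mod_cast h2
      have hdm1 : d (j + 1) = 2 * (g : ℚ) - 2 := hd_n
      rw [hdm1]
      nlinarith [mul_nonneg (by linarith : (0:ℚ) ≤ 2 * (g : ℚ) - 5)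
        (by linarith : (0:ℚ) ≤ (g : ℚ) - (r j : ℚ) - 1)]
    · -- j < m
      have h2 : r (j + 1) ≤ r m := hmono (j + 1) m (by omega) (by omega) (by omega)
      have h3 : r m < r (m + 1) := hr_mono m (by omega) (by omega)
      have h4 : r j ≤ (g : ℤ) - 2 := by omega
      have hdj1 : (r (j + 1) : ℚ) - 1 ≤ d (j + 1) := hd (j + 1) (by omega) (by omega)
      have hrjq : (r j : ℚ) ≤ (g : ℚ) - 2 := by exact_mod_cast h4
      have hrj1q : (r j : ℚ) + 1 ≤ (r (j + 1) : ℚ) := by exact_mod_cast h1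
      nlinarith [mul_nonneg (by linarith : (0:ℚ) ≤ 2 * (g : ℚ) - 6)
        (by linarith : (0:ℚ) ≤ (g : ℚ) - (r j : ℚ) - 2)]
  have hsum : 0 ≤ ∑ j ∈ Finset.Icc 1 m, (v (j + 1) - v j) *
      (d j + d (j + 1) + (2 * (g : ℚ) - 4) * ((r (m + 1) : ℚ) - (r j : ℚ))
        - (4 * (g : ℚ) - 4)) := Finset.sum_nonneg hterm
  linarith [key, hsum]
end

section
/- Let g ≥ 2 and b ≥ 2 be integers and let φ, ψ be real numbers with 0 ≤ φ < 12, ψ ≥ 0, and D := 12(8 − φ)(g − 1) − 4φ − 12ψ > 0. Let K, c, χ, χf, l be real numbers with K > 0, l ≥ 0, 12χ = K + c, c ≥ −4(b − 1), χf = χ − (g − 1)(b − 1) + l, and K − 8(g − 1)(b − 1) ≥ φ·χf − ψ·(b − 1). Then 12χ ≥ (1 − 4(12 − φ)/D)·K. -/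
/-- General arithmetic elimination in the proof of the Miyaoka–Yau type inequalities. -/
theorem stmt_5 (g b : ℕ) (hg : 2 ≤ g) (hb : 2 ≤ b)
    (φ ψ K c χ χf l : ℝ)
    (hφ0 : 0 ≤ φ) (hφ12 : φ < 12) (hψ : 0 ≤ ψ)
    (hD : 0 < 12 * (8 - φ) * ((g : ℝ) - 1) - 4 * φ - 12 * ψ)
    (hK : 0 < K) (hl : 0 ≤ l)
    (hNoether : 12 * χ = K + c)
    (hc : c ≥ -4 * ((b : ℝ) - 1))
    (hχf : χf = χ - ((g : ℝ) - 1) * ((b : ℝ) - 1) + l)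
    (hslope : K - 8 * ((g : ℝ) - 1) * ((b : ℝ) - 1) ≥ φ * χf - ψ * ((b : ℝ) - 1)) :
    12 * χ ≥ (1 - 4 * (12 - φ) / (12 * (8 - φ) * ((g : ℝ) - 1) - 4 * φ - 12 * ψ)) * K := by
  set D : ℝ := 12 * (8 - φ) * ((g : ℝ) - 1) - 4 * φ - 12 * ψ with hDdef
  set β : ℝ := (b : ℝ) - 1 with hβ
  have hkey : ((12 : ℝ) - φ) * K ≥ β * D := by
    nlinarith [mul_nonneg hφ0 hl, mul_le_mul_of_nonneg_left hc hφ0]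
  have h1 : 4 * β ≤ 4 * (12 - φ) / D * K := by
    rw [div_mul_eq_mul_div, le_div_iff₀ hD]
    nlinarith
  have h2 : (1 - 4 * (12 - φ) / D) * K = K - 4 * (12 - φ) / D * K := by ring
  linarith
end

section
/- Let g ≥ 2 and b ≥ 2 be integers and let K, c, χ, χf, l be real numbers with K > 0, l ≥ 0, 12χ = K + c, c ≥ −4(b − 1), and χf = χ − (g − 1)(b − 1) + l. If g·(K − 8(g − 1)(b − 1)) ≥ (4g − 4)·χf, then (g² − g − 1)·K ≤ (12g + 8)(g − 1)·χ. -/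
/-- Arithmetic content of the hyperelliptic case of the Miyaoka–Yau type inequality. -/
theorem stmt_6 (g b : ℕ) (hg : 2 ≤ g) (hb : 2 ≤ b)
    (K c χ χf l : ℝ)
    (hK : 0 < K) (hl : 0 ≤ l)
    (hNoether : 12 * χ = K + c)
    (hc : c ≥ -4 * ((b : ℝ) - 1))
    (hχf : χf = χ - ((g : ℝ) - 1) * ((b : ℝ) - 1) + l)
    (hslope : (g : ℝ) * (K - 8 * ((g : ℝ) - 1) * ((b : ℝ) - 1)) ≥ (4 * (g : ℝ) - 4) * χf) :
    ((g : ℝ) ^ 2 - (g : ℝ) - 1) * K ≤ (12 * (g : ℝ) + 8) * ((g : ℝ) - 1) * χ := by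
  have hg' : (2:ℝ) ≤ (g:ℝ) := by exact_mod_cast hg
  have hb' : (2:ℝ) ≤ (b:ℝ) := by exact_mod_cast hb
  subst hχf
  nlinarith [mul_le_mul_of_nonneg_left hc (by nlinarith : (0:ℝ) ≤ (g:ℝ)^2 - 1),
    mul_nonneg (by nlinarith : (0:ℝ) ≤ (g:ℝ)^2 - 1) (by nlinarith : (0:ℝ) ≤ (b:ℝ) - 1),
    mul_nonneg (by nlinarith : (0:ℝ) ≤ (g:ℝ) - 1) hl]
end

section
/- Let g ≥ 5 and b ≥ 2 be integers and let K, c, χ, χf, l be real numbers with K > 0, l ≥ 0, 12χ = K + c, c ≥ −4(b − 1), and χf = χ − (g − 1)(b − 1) + l. If (g² − 3g + 1)·(K − 8(g − 1)(b − 1)) ≥ 2(g − 1)(g − 2)·χf − 4(g − 1)(g² − 4g + 2)·(b − 1), then g·(3g² − 12g + 15)·K ≤ 12(g − 1)(3g² − 4g − 4)·χ. -/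
/-- Arithmetic content of the g ≥ 5 case of the Miyaoka–Yau type inequality. -/
theorem stmt_9 (g b : ℕ) (hg : 5 ≤ g) (hb : 2 ≤ b)
    (K c χ χf l : ℝ)
    (hK : 0 < K) (hl : 0 ≤ l)
    (hNoether : 12 * χ = K + c)
    (hc : c ≥ -4 * ((b : ℝ) - 1))
    (hχf : χf = χ - ((g : ℝ) - 1) * ((b : ℝ) - 1) + l)
    (hslope : ((g : ℝ) ^ 2 - 3 * (g : ℝ) + 1) * (K - 8 * ((g : ℝ) - 1) * ((b : ℝ) - 1))
        ≥ 2 * ((g : ℝ) - 1) * ((g : ℝ) - 2) * χf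
          - 4 * ((g : ℝ) - 1) * ((g : ℝ) ^ 2 - 4 * (g : ℝ) + 2) * ((b : ℝ) - 1)) :
    (g : ℝ) * (3 * (g : ℝ) ^ 2 - 12 * (g : ℝ) + 15) * K
      ≤ 12 * ((g : ℝ) - 1) * (3 * (g : ℝ) ^ 2 - 4 * (g : ℝ) - 4) * χ := by
  have hG : (5 : ℝ) ≤ (g : ℝ) := by exact_mod_cast hg
  have hB : (2 : ℝ) ≤ (b : ℝ) := by exact_mod_cast hb
  subst hχf
  have hBpos : (0 : ℝ) ≤ 12 * χ + 4 * ((b : ℝ) - 1) - K := by linarith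
  have h1 : (0 : ℝ) ≤ ((g : ℝ) - 1) * ((g : ℝ) - 2) * ((g : ℝ) + 1) := by nlinarith
  have h2 : (0 : ℝ) ≤ ((g : ℝ) - 1) * ((g : ℝ) - 2) := by nlinarith
  nlinarith [mul_nonneg h1 hBpos, mul_nonneg h2 hl, hslope]
end
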